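/- Let m, n be coprime integers with n ≥ 1 and α = (m/n)·2π. Then cos α is a rational number if and only if φ(n) ≤ 2, i.e. if and only if n ∈ {1, 2, 3, 4, 6}. -/

import Mathlib

open Polynomial

lemma aux_totient_le_two_iff (n : ℕ) (hn : 1 ≤ n) :
    Nat.totient n ≤ 2 ↔ n ∈ ({1, 2, 3, 4, 6} : Set ℕ) := by
  simp only [Set.mem_insert_iff, Set.mem_singleton_iff]
  constructor
  · intro h
    have h12 : n ∣ 12 := by
      rw [Nat.dvd_iff_prime_pow_dvd_dvd]
      intro p k hp hpk
      have htot : Nat.totient (p ^ k) ≤ 2 := by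
        have hd : Nat.totient (p ^ k) ∣ Nat.totient n := Nat.totient_dvd_of_dvd hpk
        exact le_trans (Nat.le_of_dvd (Nat.totient_pos.2 hn) hd) h
      rcases Nat.eq_zero_or_pos k with rfl | hk
      · simpa using one_dvd _
      rw [Nat.totient_prime_pow hp hk] at htot
      have hp2 : 2 ≤ p := hp.two_le
      have hple : p - 1 ≤ 2 := by
        calc p - 1 ≤ p ^ (k - 1) * (p - 1) :=
              Nat.le_mul_of_pos_left _ (Nat.pow_pos (by omega))
          _ ≤ 2 := htot
      have hp3 : p ≤ 3 := by omega
      interval_cases p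
      · -- p = 2
        have : 2 ^ (k - 1) ≤ 2 := by simpa using htot
        have hk2 : k ≤ 2 := by
          by_contra hk3
          have : 2 ^ 2 ≤ 2 ^ (k - 1) := Nat.pow_le_pow_right (by norm_num) (by omega)
          omega
        interval_cases k
        · exact ⟨6, rfl⟩
        · exact ⟨3, rfl⟩
      · -- p = 3
        have h3 : 3 ^ (k - 1) * 2 ≤ 2 := htot
        have hk1 : k = 1 := by
          by_contra hk2
          have : 3 ^ 1 ≤ 3 ^ (k - 1) := Nat.pow_le_pow_right (by norm_num) (by omega)
          omega
        subst hk1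
        exact ⟨4, rfl⟩
    have hle : n ≤ 12 := Nat.le_of_dvd (by norm_num) h12
    interval_cases n <;> revert h12 h <;> decide
  · rintro (rfl | rfl | rfl | rfl | rfl) <;> decide

lemma aux_key (r n : ℕ) (hn : 0 < n) (hco : Nat.Coprime r n)
    (hq : ∃ q : ℚ, Real.cos (((r : ℝ) / (n : ℝ)) * (2 * Real.pi)) = (q : ℝ)) :
    Nat.totient n ≤ 2 := by
  obtain ⟨q, hq⟩ := hq
  set ζ : ℂ := Complex.exp (2 * Real.pi * Complex.I * ((r : ℂ) / (n : ℂ))) with hζ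
  have hprim : IsPrimitiveRoot ζ n :=
    Complex.isPrimitiveRoot_exp_of_coprime r n (by omega) hco
  have hζ0 : ζ ≠ 0 := Complex.exp_ne_zero _
  -- ζ + ζ⁻¹ = 2 q
  have hsum : ζ + ζ⁻¹ = 2 * (q : ℂ) := by
    have h1 : ζ = Complex.exp ((((r : ℝ) / (n : ℝ)) * (2 * Real.pi) : ℝ) * Complex.I) := by
      rw [hζ]; congr 1; push_cast; ring
    have h2 : ζ⁻¹ = Complex.exp (-(((((r : ℝ) / (n : ℝ)) * (2 * Real.pi) : ℝ)) : ℂ) * Complex.I) := by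
      rw [h1, ← Complex.exp_neg]; congr 1; ring
    rw [h2, h1]
    have hc : Complex.cos ((((r : ℝ) / (n : ℝ)) * (2 * Real.pi) : ℝ) : ℂ) = (q : ℂ) := by
      rw [← Complex.ofReal_cos, hq]; norm_cast
    rw [Complex.cos] at hc
    linear_combination 2 * hc
  have haeval : (Polynomial.aeval ζ) (X ^ 2 - C (2 * q) * X + 1 : ℚ[X]) = 0 := by
    have hamap : ∀ x : ℚ, algebraMap ℚ ℂ x = (x : ℂ) := fun x => map_ratCast _ x
    simp only [map_add, map_sub, map_mul, map_pow, aeval_X, aeval_C, map_one, hamap]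
    have : ζ * (ζ + ζ⁻¹) = ζ * (2 * (q : ℂ)) := by rw [hsum]
    rw [mul_add, mul_inv_cancel₀ hζ0] at this
    push_cast
    linear_combination this
  have hp0 : (X ^ 2 - C (2 * q) * X + 1 : ℚ[X]) ≠ 0 := by
    intro h
    have := congrArg (fun p => Polynomial.coeff p 2) h
    simp [coeff_one] at this
  have hdeg : (minpoly ℚ ζ).degree ≤ (X ^ 2 - C (2 * q) * X + 1 : ℚ[X]).degree :=
    minpoly.degree_le_of_ne_zero ℚ ζ hp0 haeval
  have hdeg2 : (X ^ 2 - C (2 * q) * X + 1 : ℚ[X]).degree ≤ 2 := by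
    compute_degree
  have hmin : Polynomial.cyclotomic n ℚ = minpoly ℚ ζ :=
    Polynomial.cyclotomic_eq_minpoly_rat hprim hn
  have : (Polynomial.cyclotomic n ℚ).natDegree ≤ 2 := by
    rw [hmin]
    exact Polynomial.natDegree_le_iff_degree_le.2 (le_trans hdeg hdeg2)
  rwa [Polynomial.natDegree_cyclotomic] at this

theorem cos_rational_angle_rational_iff_totient_le_two
    (m : ℤ) (n : ℕ) (hn : 1 ≤ n) (hco : Int.gcd m (n : ℤ) = 1)
    (α : ℝ) (hα : α = ((m : ℝ) / (n : ℝ)) * (2 * Real.pi)) :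
    ((∃ q : ℚ, Real.cos α = (q : ℝ)) ↔ Nat.totient n ≤ 2) ∧
    ((∃ q : ℚ, Real.cos α = (q : ℝ)) ↔ n ∈ ({1, 2, 3, 4, 6} : Set ℕ)) := by
  have hn0 : (n : ℝ) ≠ 0 := by positivity
  set r : ℕ := (m % (n : ℤ)).toNat with hrdef
  have hrval : (r : ℤ) = m % (n : ℤ) := Int.toNat_of_nonneg (Int.emod_nonneg m (by exact_mod_cast (by omega : n ≠ 0)))
  have hrlt : r < n := by
    have := Int.emod_lt_of_pos m (b := (n : ℤ)) (by exact_mod_cast hn)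
    omega
  have hm : m = (n : ℤ) * (m / (n : ℤ)) + (r : ℤ) := by
    rw [hrval]; exact (Int.mul_ediv_add_emod m (n : ℤ)).symm
  have hrco : Nat.Coprime r n := by
    have h1 : IsCoprime m (n : ℤ) := Int.isCoprime_iff_gcd_eq_one.2 hco
    have h2 : IsCoprime ((r : ℤ)) (n : ℤ) := by
      have := h1.add_mul_left_left (-(m / (n : ℤ)))
      have hr' : (r : ℤ) = m + (n : ℤ) * (-(m / (n : ℤ))) := by linear_combination -hm
      rwa [← hr'] at this
    exact Nat.isCoprime_iff_coprime.1 h2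
  -- reduce the angle
  have hcos : Real.cos α = Real.cos (((r : ℝ) / (n : ℝ)) * (2 * Real.pi)) := by
    have : α = ((r : ℝ) / (n : ℝ)) * (2 * Real.pi) + (m / (n : ℤ) : ℤ) * (2 * Real.pi) := by
      rw [hα]
      have : (m : ℝ) = (n : ℝ) * ((m / (n : ℤ) : ℤ) : ℝ) + (r : ℝ) := by exact_mod_cast hm
      rw [this]; field_simp; ring
    rw [this, Real.cos_add_int_mul_two_pi]
  have main : (∃ q : ℚ, Real.cos α = (q : ℝ)) ↔ Nat.totient n ≤ 2 := by
    constructor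
    · intro ⟨q, hq⟩
      exact aux_key r n hn hrco ⟨q, by rw [← hcos]; exact hq⟩
    · intro htot
      have hmem := (aux_totient_le_two_iff n hn).1 htot
      simp only [Set.mem_insert_iff, Set.mem_singleton_iff] at hmem
      rw [hcos]
      rcases hmem with rfl | rfl | rfl | rfl | rfl
      · -- n = 1
        interval_cases r
        exact ⟨1, by push_cast; norm_num⟩
      · -- n = 2
        interval_cases r
        · exact absurd hrco (by decide)
        · exact ⟨-1, by push_cast; norm_num [show ((1:ℝ)/2) * (2 * Real.pi) = Real.pi by ring]⟩
      · -- n = 3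
        interval_cases r
        · exact absurd hrco (by decide)
        · refine ⟨-(1/2), ?_⟩
          push_cast
          rw [show ((1:ℝ)/3) * (2 * Real.pi) = Real.pi - Real.pi / 3 by ring,
            Real.cos_pi_sub, Real.cos_pi_div_three]
        · refine ⟨-(1/2), ?_⟩
          push_cast
          rw [show ((2:ℝ)/3) * (2 * Real.pi) = 2 * Real.pi - (Real.pi - Real.pi / 3) by ring,
            Real.cos_two_pi_sub, Real.cos_pi_sub, Real.cos_pi_div_three]
      · -- n = 4
        interval_cases r
        · exact absurd hrco (by decide)
        · exact ⟨0, by push_cast; norm_num [show ((1:ℝ)/4) * (2 * Real.pi) = Real.pi / 2 by ring]⟩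
        · exact absurd hrco (by decide)
        · refine ⟨0, ?_⟩
          push_cast
          rw [show ((3:ℝ)/4) * (2 * Real.pi) = 2 * Real.pi - Real.pi / 2 by ring,
            Real.cos_two_pi_sub, Real.cos_pi_div_two]
      · -- n = 6
        interval_cases r
        · exact absurd hrco (by decide)
        · exact ⟨1/2, by push_cast; norm_num [show ((1:ℝ)/6) * (2 * Real.pi) = Real.pi / 3 by ring,
            Real.cos_pi_div_three]⟩
        · exact absurd hrco (by decide)
        · exact absurd hrco (by decide)
        · exact absurd hrco (by decide)
        · refine ⟨1/2, ?_⟩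
          push_cast
          rw [show ((5:ℝ)/6) * (2 * Real.pi) = 2 * Real.pi - Real.pi / 3 by ring,
            Real.cos_two_pi_sub, Real.cos_pi_div_three]
  exact ⟨main, main.trans (aux_totient_le_two_iff n hn)⟩
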